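/- Let S be a right-sided convex point set of n points in general position and let P = d_1,...,d_{n-1} be a path with all labels in {U,D,R}. Then P admits a planar direction-consistent embedding E on S such that E(v_1) = b(S) if d_1 = U, E(v_1) = t(S) if d_1 = D, and E(v_1) = ℓ(S) ∈ {t(S), b(S)} if d_1 = R. -/

import Mathlib

/-- Edge direction labels. -/
inductive Dir | U | D | L | R
deriving DecidableEq

/-- Opposite label: U↔D, L↔R. -/
def Dir.opp : Dir → Dir
  | .U => .D | .D => .U | .L => .R | .R => .L

/-- Label after counterclockwise rotation by π/2: U↦L, D↦R, R↦U, L↦D. -/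
def Dir.rot : Dir → Dir
  | .U => .L | .D => .R | .R => .U | .L => .D

/-- Label after vertical-line reflection: U↦U, D↦D, R↦L, L↦R. -/
def Dir.mir : Dir → Dir
  | .U => .U | .D => .D | .R => .L | .L => .R

/-- An edge from `a` to `b` is consistent with a direction label. -/
def dirOk : Dir → ℝ × ℝ → ℝ × ℝ → Prop
  | .U, a, b => a.2 < b.2
  | .D, a, b => b.2 < a.2
  | .R, a, b => a.1 < b.1
  | .L, a, b => b.1 < a.1

/-- The drawing of a path with edge labels `d` and vertex placement `E` is
direction-consistent. -/
def DirConsistent {m : ℕ} (d : Fin m → Dir) (E : Fin (m + 1) → ℝ × ℝ) : Prop :=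
  ∀ i : Fin m, dirOk (d i) (E i.castSucc) (E i.succ)

/-- The straight-line drawing of the path with vertex placement `E` is planar:
non-adjacent segments are disjoint; adjacent segments meet only at the shared endpoint. -/
def PlanarDrawing {m : ℕ} (E : Fin (m + 1) → ℝ × ℝ) : Prop :=
  (∀ i j : Fin m, (i : ℕ) + 1 < (j : ℕ) →
    segment ℝ (E i.castSucc) (E i.succ) ∩ segment ℝ (E j.castSucc) (E j.succ) = ∅) ∧
  (∀ i j : Fin m, (i : ℕ) + 1 = (j : ℕ) →
    segment ℝ (E i.castSucc) (E i.succ) ∩ segment ℝ (E j.castSucc) (E j.succ) = {E i.succ})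

/-- `E` is an embedding of the path vertices onto the point set `S`. -/
def EmbOn {m : ℕ} (E : Fin (m + 1) → ℝ × ℝ) (S : Set (ℝ × ℝ)) : Prop :=
  Function.Injective E ∧ Set.range E = S

/-- Planar direction-consistent embedding of the labeled path `d` on `S`. -/
def PDCE {m : ℕ} (d : Fin m → Dir) (E : Fin (m + 1) → ℝ × ℝ) (S : Set (ℝ × ℝ)) : Prop :=
  EmbOn E S ∧ DirConsistent d E ∧ PlanarDrawing E

/-- `S` is in convex position. -/
def ConvexPos (S : Set (ℝ × ℝ)) : Prop :=
  ConvexIndependent ℝ ((↑) : S → ℝ × ℝ)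

/-- No three distinct points of `S` are collinear. -/
def NoThreeCollinear (S : Set (ℝ × ℝ)) : Prop :=
  ∀ p ∈ S, ∀ q ∈ S, ∀ r ∈ S, p ≠ q → p ≠ r → q ≠ r →
    ¬ Collinear ℝ ({p, q, r} : Set (ℝ × ℝ))

/-- General position: no three collinear, no two points with equal x- or y-coordinate. -/
def GenPos (S : Set (ℝ × ℝ)) : Prop :=
  NoThreeCollinear S ∧ ∀ p ∈ S, ∀ q ∈ S, p ≠ q → p.1 ≠ q.1 ∧ p.2 ≠ q.2

def IsTopmost (S : Set (ℝ × ℝ)) (t : ℝ × ℝ) : Prop :=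
  t ∈ S ∧ ∀ p ∈ S, p ≠ t → p.2 < t.2
def IsBottommost (S : Set (ℝ × ℝ)) (b : ℝ × ℝ) : Prop :=
  b ∈ S ∧ ∀ p ∈ S, p ≠ b → b.2 < p.2
def IsLeftmost (S : Set (ℝ × ℝ)) (l : ℝ × ℝ) : Prop :=
  l ∈ S ∧ ∀ p ∈ S, p ≠ l → l.1 < p.1
def IsRightmost (S : Set (ℝ × ℝ)) (r : ℝ × ℝ) : Prop :=
  r ∈ S ∧ ∀ p ∈ S, p ≠ r → p.1 < r.1

/-- Cross product telling on which side of the directed line `a → b` the point `p` lies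
(`0 < cross a b p` means `p` is strictly to the left). -/
def cross (a b p : ℝ × ℝ) : ℝ :=
  (b.1 - a.1) * (p.2 - a.2) - (b.2 - a.2) * (p.1 - a.1)

/-- With `b` bottommost and `t` topmost, all other points lie strictly to the left of the
line through `b` and `t`. -/
def LeftSided (S : Set (ℝ × ℝ)) (b t : ℝ × ℝ) : Prop :=
  IsBottommost S b ∧ IsTopmost S t ∧ ∀ p ∈ S, p ≠ b → p ≠ t → 0 < cross b t p

/-- With `b` bottommost and `t` topmost, all other points lie strictly to the right of the
line through `b` and `t`. -/
def RightSided (S : Set (ℝ × ℝ)) (b t : ℝ × ℝ) : Prop :=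
  IsBottommost S b ∧ IsTopmost S t ∧ ∀ p ∈ S, p ≠ b → p ≠ t → cross b t p < 0

/-- Two points of `S` are consecutive on the convex hull of `S`: all other points of `S`
lie strictly on one side of the line through them. -/
def HullConsecutive (S : Set (ℝ × ℝ)) (p q : ℝ × ℝ) : Prop :=
  p ∈ S ∧ q ∈ S ∧ p ≠ q ∧
    ((∀ r ∈ S, r ≠ p → r ≠ q → 0 < cross p q r) ∨
     (∀ r ∈ S, r ≠ p → r ≠ q → cross p q r < 0))

/-- Strip-convex point set with bottommost `b`, leftmost `l`, topmost `t`, rightmost `r`: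
`b` and `l` coincide or are hull-consecutive, and so do `t` and `r`. -/
def StripConvex (S : Set (ℝ × ℝ)) (b l t r : ℝ × ℝ) : Prop :=
  IsBottommost S b ∧ IsLeftmost S l ∧ IsTopmost S t ∧ IsRightmost S r ∧
    (b = l ∨ HullConsecutive S b l) ∧ (t = r ∨ HullConsecutive S t r)

/-- `T` is a consecutive subset of the convex point set `S` along its hull:
it can be separated from `S \ T` by a line. -/
def Consecutive (S T : Set (ℝ × ℝ)) : Prop :=
  T ⊆ S ∧ ∃ f : (ℝ × ℝ) →ₗ[ℝ] ℝ, ∃ c : ℝ,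
    (∀ p ∈ T, c < f p) ∧ ∀ p ∈ S \ T, f p < c

section Helpers

lemma cross_swap23 (a b p : ℝ × ℝ) : cross a p b = - cross a b p := by unfold cross; ring

lemma cross_cyc (a b p : ℝ × ℝ) : cross b p a = cross a b p := by unfold cross; ring

lemma cross_swap12 (a b p : ℝ × ℝ) : cross b a p = - cross a b p := by unfold cross; ring

lemma cross_self_left (a b : ℝ × ℝ) : cross a b a = 0 := by unfold cross; ring

lemma cross_self_right (a b : ℝ × ℝ) : cross a b b = 0 := by unfold cross; ring

lemma cross_combo (v w x y : ℝ × ℝ) {a c : ℝ} (hac : a + c = 1) :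
    cross v w (a • x + c • y) = a * cross v w x + c * cross v w y := by
  unfold cross
  simp only [Prod.fst_add, Prod.snd_add, Prod.smul_fst, Prod.smul_snd, smul_eq_mul]
  linear_combination (w.1 * v.2 - v.1 * w.2) * hac

lemma collinear_of_cross {a b c : ℝ × ℝ} (hy : a.2 ≠ b.2) (h : cross a b c = 0) :
    Collinear ℝ ({a, b, c} : Set (ℝ × ℝ)) := by
  rw [collinear_iff_of_mem (Set.mem_insert a {b, c})]
  refine ⟨b - a, fun p hp => ?_⟩
  have hba : b.2 - a.2 ≠ 0 := sub_ne_zero.2 (Ne.symm hy)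
  unfold cross at h
  simp only [Set.mem_insert_iff, Set.mem_singleton_iff] at hp
  rcases hp with rfl | rfl | rfl
  · exact ⟨0, by simp⟩
  · exact ⟨1, by simp⟩
  · refine ⟨(p.2 - a.2) / (b.2 - a.2), ?_⟩
    refine (Prod.ext_iff.2 ⟨?_, ?_⟩ : p = _)
    · simp only [vadd_eq_add, Prod.fst_add, Prod.smul_fst, smul_eq_mul, Prod.fst_sub]
      field_simp
      linear_combination -h
    · simp only [vadd_eq_add, Prod.snd_add, Prod.smul_snd, smul_eq_mul, Prod.snd_sub]
      field_simp
      ring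

lemma convexPos_notin {S : Set (ℝ × ℝ)} (h : ConvexPos S) {q : ℝ × ℝ} (hq : q ∈ S) :
    q ∉ convexHull ℝ (S \ {q}) :=
  (convexIndependent_set_iff_notMem_convexHull_diff.1 h) q hq

lemma convexPos_mono {S T : Set (ℝ × ℝ)} (h : T ⊆ S) (hS : ConvexPos S) : ConvexPos T := by
  rw [ConvexPos, convexIndependent_set_iff_notMem_convexHull_diff] at *
  intro x hx hmem
  exact hS x (h hx)
    (convexHull_mono (Set.diff_subset_diff h (subset_refl _)) hmem)

lemma genPos_mono {S T : Set (ℝ × ℝ)} (h : T ⊆ S) (hS : GenPos S) : GenPos T :=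
  ⟨fun p hp q hq r hr h1 h2 h3 => hS.1 p (h hp) q (h hq) r (h hr) h1 h2 h3,
   fun p hp q hq hne => hS.2 p (h hp) q (h hq) hne⟩

end Helpers

section Extremal

lemma exists_bottommost {S : Set (ℝ × ℝ)} (hfin : S.Finite) (hne : S.Nonempty)
    (hgen : GenPos S) : ∃ b, IsBottommost S b := by
  obtain ⟨b, hbS, hb⟩ := Set.exists_min_image S (fun p => p.2) hfin hne
  exact ⟨b, hbS, fun p hp hne' =>
    lt_of_le_of_ne (hb p hp) (Ne.symm (hgen.2 p hp b hbS hne').2)⟩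

lemma exists_topmost {S : Set (ℝ × ℝ)} (hfin : S.Finite) (hne : S.Nonempty)
    (hgen : GenPos S) : ∃ t, IsTopmost S t := by
  obtain ⟨t, htS, ht⟩ := Set.exists_max_image S (fun p => p.2) hfin hne
  exact ⟨t, htS, fun p hp hne' =>
    lt_of_le_of_ne (ht p hp) ((hgen.2 p hp t htS hne').2)⟩

lemma exists_leftmost {S : Set (ℝ × ℝ)} (hfin : S.Finite) (hne : S.Nonempty)
    (hgen : GenPos S) : ∃ l, IsLeftmost S l := by
  obtain ⟨l, hlS, hl⟩ := Set.exists_min_image S (fun p => p.1) hfin hne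
  exact ⟨l, hlS, fun p hp hne' =>
    lt_of_le_of_ne (hl p hp) (Ne.symm (hgen.2 p hp l hlS hne').1)⟩

end Extremal

section Chain

lemma affine_pt (x y : ℝ × ℝ) (r : ℝ) :
    (1-r) • x + r • y = (x.1 + r*(y.1-x.1), x.2 + r*(y.2-x.2)) := by
  refine Prod.ext_iff.2 ⟨?_, ?_⟩ <;>
    simp only [Prod.fst_add, Prod.snd_add, Prod.smul_fst, Prod.smul_snd, smul_eq_mul] <;> ring

/-- The key geometric fact: in a right-sided convex point set in general position,
any point of `S` lying (in `y`-coordinate) strictly between two other points of `S`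
is strictly to the right of the directed line through them (upward direction). -/
lemma chain {S : Set (ℝ × ℝ)} (hconv : ConvexPos S) (hgen : GenPos S)
    {b t : ℝ × ℝ} (hside : RightSided S b t)
    {a c q : ℝ × ℝ} (ha : a ∈ S) (hc : c ∈ S) (hq : q ∈ S)
    (h1 : a.2 < q.2) (h2 : q.2 < c.2) : cross a c q < 0 := by
  obtain ⟨hb, ht, hlt⟩ := hside
  have hby : b.2 ≤ a.2 := by
    rcases eq_or_ne a b with rfl | hab
    · exact le_refl _
    · exact (hb.2 a ha hab).le
  have hty : c.2 ≤ t.2 := by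
    rcases eq_or_ne c t with rfl | hct
    · exact le_refl _
    · exact (ht.2 c hc hct).le
  have hbq : b.2 < q.2 := lt_of_le_of_lt hby h1
  have hqt : q.2 < t.2 := lt_of_lt_of_le h2 hty
  have hqb : q ≠ b := fun h => by rw [h] at hbq; exact lt_irrefl _ hbq
  have hqt' : q ≠ t := fun h => by rw [h] at hqt; exact lt_irrefl _ hqt
  have hcb : cross b t q < 0 := hlt q hq hqb hqt'
  have haq : a ≠ q := fun h => by rw [h] at h1; exact lt_irrefl _ h1
  have hqc : q ≠ c := fun h => by rw [h] at h2; exact lt_irrefl _ h2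
  have hac : a ≠ c := fun h => by rw [h] at h1; exact absurd (h1.trans h2) (lt_irrefl _)
  have hacy : a.2 ≠ c.2 := ne_of_lt (h1.trans h2)
  have hne0 : cross a c q ≠ 0 := fun h0 =>
    hgen.1 a ha c hc q hq hac haq hqc.symm (collinear_of_cross hacy h0)
  by_contra hcon
  have hpos : 0 < cross a c q := lt_of_le_of_ne (not_lt.1 hcon) (Ne.symm hne0)
  have htb : (0:ℝ) < t.2 - b.2 := by linarith
  have hca : (0:ℝ) < c.2 - a.2 := by linarith
  set μ : ℝ := (q.2 - b.2) / (t.2 - b.2) with hμ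
  set lam : ℝ := (q.2 - a.2) / (c.2 - a.2) with hlam
  set ux : ℝ := b.1 + μ * (t.1 - b.1) with hux_def
  set sx : ℝ := a.1 + lam * (c.1 - a.1) with hsx_def
  have hμ0 : 0 ≤ μ := div_nonneg (by linarith) htb.le
  have hμ1 : μ ≤ 1 := by rw [hμ, div_le_one htb]; linarith
  have hlam0 : 0 ≤ lam := div_nonneg (by linarith) hca.le
  have hlam1 : lam ≤ 1 := by rw [hlam, div_le_one hca]; linarith
  have humem : ((ux, q.2) : ℝ × ℝ) ∈ segment ℝ b t := by
    refine ⟨1 - μ, μ, by linarith, hμ0, by ring, ?_⟩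
    rw [affine_pt]
    simp only [Prod.mk.injEq]
    refine ⟨by trivial, ?_⟩
    rw [hμ]
    field_simp
    ring
  have hsmem : ((sx, q.2) : ℝ × ℝ) ∈ segment ℝ a c := by
    refine ⟨1 - lam, lam, by linarith, hlam0, by ring, ?_⟩
    rw [affine_pt]
    simp only [Prod.mk.injEq]
    refine ⟨by trivial, ?_⟩
    rw [hlam]
    field_simp
    ring
  have hux : ux < q.1 := by
    have e : (q.1 - ux) * (t.2 - b.2) = -cross b t q := by
      rw [hux_def, hμ]
      unfold cross
      field_simp
      ring
    nlinarith [e, hcb, htb]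
  have hsx : q.1 < sx := by
    have e : (sx - q.1) * (c.2 - a.2) = cross a c q := by
      rw [hsx_def, hlam]
      unfold cross
      field_simp
      ring
    nlinarith [e, hpos, hca]
  have hsu : (0:ℝ) < sx - ux := by linarith
  have hqmem : q ∈ segment ℝ ((ux, q.2) : ℝ × ℝ) ((sx, q.2) : ℝ × ℝ) := by
    set θ : ℝ := (q.1 - ux) / (sx - ux) with hθ
    refine ⟨1 - θ, θ, ?_, div_nonneg (by linarith) hsu.le, by ring, ?_⟩
    · rw [sub_nonneg, hθ, div_le_one hsu]; linarith
    · rw [affine_pt]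
      refine Prod.ext_iff.2 ⟨?_, ?_⟩
      · show ux + θ * (sx - ux) = q.1
        rw [hθ]
        field_simp
        ring
      · show q.2 + θ * (q.2 - q.2) = q.2
        ring
  have hsub : ({b, t, a, c} : Set (ℝ × ℝ)) ⊆ S \ {q} := by
    intro p hp
    simp only [Set.mem_insert_iff, Set.mem_singleton_iff] at hp
    rcases hp with rfl | rfl | rfl | rfl
    · exact ⟨hb.1, fun h => hqb (Set.mem_singleton_iff.1 h).symm⟩
    · exact ⟨ht.1, fun h => hqt' (Set.mem_singleton_iff.1 h).symm⟩
    · exact ⟨ha, fun h => haq (Set.mem_singleton_iff.1 h)⟩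
    · exact ⟨hc, fun h => hqc (Set.mem_singleton_iff.1 h).symm⟩
  have hcvx := convex_convexHull ℝ (S \ {q} : Set (ℝ × ℝ))
  have hmem : ∀ p ∈ ({b, t, a, c} : Set (ℝ × ℝ)), p ∈ convexHull ℝ (S \ {q}) :=
    fun p hp => subset_convexHull ℝ _ (hsub hp)
  have hu' : ((ux, q.2) : ℝ × ℝ) ∈ convexHull ℝ (S \ {q}) :=
    hcvx.segment_subset (hmem b (by simp)) (hmem t (by simp)) humem
  have hs' : ((sx, q.2) : ℝ × ℝ) ∈ convexHull ℝ (S \ {q}) :=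
    hcvx.segment_subset (hmem a (by simp)) (hmem c (by simp)) hsmem
  exact convexPos_notin hconv hq (hcvx.segment_subset hu' hs' hqmem)

/-- The leftmost point of a right-sided set is the bottommost or the topmost point. -/
lemma leftmost_eq_bot_or_top {S : Set (ℝ × ℝ)} {b t l : ℝ × ℝ}
    (hside : RightSided S b t) (hl : IsLeftmost S l) : l = b ∨ l = t := by
  obtain ⟨hb, ht, hlt⟩ := hside
  by_contra hcon
  push_neg at hcon
  obtain ⟨hlb, hlt'⟩ := hcon
  have h1 : b.2 < l.2 := hb.2 l hl.1 hlb
  have h2 : l.2 < t.2 := ht.2 l hl.1 hlt'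
  have h3 : cross b t l < 0 := hlt l hl.1 hlb hlt'
  have h4 : l.1 < b.1 := hl.2 b hb.1 (fun h => hlb h.symm)
  have h5 : l.1 < t.1 := hl.2 t ht.1 (fun h => hlt' h.symm)
  unfold cross at h3
  nlinarith [mul_neg_of_neg_of_pos (show l.1 - b.1 < 0 by linarith) (show (0:ℝ) < t.2 - l.2 by linarith),
    mul_neg_of_neg_of_pos (show l.1 - t.1 < 0 by linarith) (show (0:ℝ) < l.2 - b.2 by linarith)]

end Chain

section Cons

lemma combo_neg {a c fu fv : ℝ} (ha : 0 ≤ a) (hc : 0 ≤ c) (hac : a + c = 1)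
    (hu : fu < 0) (hv : fv < 0) : a * fu + c * fv < 0 := by
  rcases ha.lt_or_eq with h | h
  · have h1 := mul_neg_of_pos_of_neg h hu
    have h2 : c * fv ≤ 0 := mul_nonpos_iff.2 (Or.inl ⟨hc, hv.le⟩)
    linarith
  · have hc1 : c = 1 := by linarith
    rw [← h, hc1]
    simpa using hv

lemma cons_pdce {m : ℕ} (d : Fin (m + 1) → Dir) (S : Set (ℝ × ℝ)) (v1 : ℝ × ℝ)
    (hv1S : v1 ∈ S) (E' : Fin (m + 1) → ℝ × ℝ)
    (hE' : PDCE (fun i : Fin m => d i.succ) E' (S \ {v1}))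
    (hdir : dirOk (d 0) v1 (E' 0)) (σ : ℝ)
    (hσ : ∀ q ∈ S \ {v1}, q ≠ E' 0 → σ * cross v1 (E' 0) q < 0) :
    PDCE d (Fin.cons v1 E') S := by
  obtain ⟨⟨hinj, hrange⟩, hdc, hp1, hp2⟩ := hE'
  have hv1nr : v1 ∉ Set.range E' := by rw [hrange]; simp
  have hfv1 : σ * cross v1 (E' 0) v1 = 0 := by rw [cross_self_left]; ring
  have hfw : σ * cross v1 (E' 0) (E' 0) = 0 := by rw [cross_self_right]; ring
  have hfneg : ∀ k : Fin (m + 1), k ≠ 0 → σ * cross v1 (E' 0) (E' k) < 0 := fun k hk =>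
    hσ (E' k) (hrange ▸ ⟨k, rfl⟩) (fun h => hk (hinj h))
  have hfseg : ∀ {x y z : ℝ × ℝ}, z ∈ segment ℝ x y → ∃ a c : ℝ, 0 ≤ a ∧ 0 ≤ c ∧
      a + c = 1 ∧ σ * cross v1 (E' 0) z
        = a * (σ * cross v1 (E' 0) x) + c * (σ * cross v1 (E' 0) y) := by
    rintro x y z ⟨a, c, ha, hc, hac, rfl⟩
    exact ⟨a, c, ha, hc, hac, by rw [cross_combo _ _ _ _ hac]; ring⟩
  have eA : ∀ k : Fin m, (Fin.cons v1 E' : Fin (m + 2) → ℝ × ℝ) ((k.succ).castSucc)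
      = E' k.castSucc := fun k => by rw [← Fin.succ_castSucc, Fin.cons_succ]
  have eB : ∀ k : Fin m, (Fin.cons v1 E' : Fin (m + 2) → ℝ × ℝ) ((k.succ).succ)
      = E' k.succ := fun k => Fin.cons_succ _ _ _
  refine ⟨⟨?_, ?_⟩, ?_, ?_, ?_⟩
  · exact Fin.cons_injective_iff.2 ⟨hv1nr, hinj⟩
  · rw [Fin.range_cons, hrange, Set.insert_diff_singleton, Set.insert_eq_self.2 hv1S]
  · intro i
    rcases Fin.eq_zero_or_eq_succ i with rfl | ⟨k, rfl⟩
    · rw [Fin.castSucc_zero, Fin.cons_zero, Fin.cons_succ]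
      exact hdir
    · rw [eA, eB]
      exact hdc k
  · -- non-adjacent edges are disjoint
    intro i j hij
    rcases Fin.eq_zero_or_eq_succ i with rfl | ⟨k, rfl⟩
    · rcases Fin.eq_zero_or_eq_succ j with rfl | ⟨k, rfl⟩
      · omega
      · have hk0 : (k : ℕ) ≠ 0 := by
          simp only [Fin.val_succ, Fin.val_zero] at hij
          omega
        have hkc : k.castSucc ≠ (0 : Fin (m + 1)) := by
          intro h; apply hk0; simpa [Fin.ext_iff] using h
        rw [Fin.castSucc_zero, Fin.cons_zero, Fin.cons_succ, eA, eB]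
        apply Set.eq_empty_iff_forall_notMem.2
        rintro z ⟨hz1, hz2⟩
        obtain ⟨a, c, -, -, hac, hfz⟩ := hfseg hz1
        obtain ⟨a', c', ha', hc', hac', hfz'⟩ := hfseg hz2
        rw [hfv1, hfw] at hfz
        have h1 : σ * cross v1 (E' 0) z = 0 := by rw [hfz]; ring
        have h2 : σ * cross v1 (E' 0) z < 0 := by
          rw [hfz']
          exact combo_neg ha' hc' hac' (hfneg _ hkc) (hfneg _ (Fin.succ_ne_zero k))
        linarith
    · rcases Fin.eq_zero_or_eq_succ j with rfl | ⟨l, rfl⟩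
      · simp only [Fin.val_zero] at hij; omega
      · rw [eA k, eB k, eA l, eB l]
        apply hp1 k l
        simp only [Fin.val_succ] at hij
        omega
  · -- adjacent edges meet exactly at the shared vertex
    intro i j hij
    rcases Fin.eq_zero_or_eq_succ i with rfl | ⟨k, rfl⟩
    · rcases Fin.eq_zero_or_eq_succ j with rfl | ⟨k, rfl⟩
      · omega
      · have hk0 : (k : ℕ) = 0 := by
          simp only [Fin.val_succ, Fin.val_zero] at hij
          omega
        have hkc0 : k.castSucc = (0 : Fin (m + 1)) := by
          simp [Fin.ext_iff, hk0]
        have hvne : σ * cross v1 (E' 0) (E' k.succ) < 0 := hfneg _ (Fin.succ_ne_zero _)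
        rw [Fin.castSucc_zero, Fin.cons_zero, Fin.cons_succ, eA, eB, hkc0]
        ext z
        simp only [Set.mem_inter_iff, Set.mem_singleton_iff]
        constructor
        · rintro ⟨hz1, hz2⟩
          obtain ⟨a, c, -, -, hac, hfz⟩ := hfseg hz1
          rw [hfv1, hfw] at hfz
          have h1 : σ * cross v1 (E' 0) z = 0 := by rw [hfz]; ring
          obtain ⟨a', c', ha', hc', hac', hzeq⟩ := hz2
          have h2 : σ * cross v1 (E' 0) z
              = c' * (σ * cross v1 (E' 0) (E' k.succ)) := by
            rw [← hzeq, cross_combo _ _ _ _ hac', cross_self_right]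
            ring
          have hc'0 : c' = 0 := by
            rcases mul_eq_zero.1 (h2 ▸ h1) with h | h
            · exact h
            · exact absurd h (ne_of_lt hvne)
          have ha'1 : a' = 1 := by linarith
          rw [← hzeq, hc'0, ha'1]
          simp
        · rintro rfl
          exact ⟨right_mem_segment ℝ _ _, left_mem_segment ℝ _ _⟩
    · rcases Fin.eq_zero_or_eq_succ j with rfl | ⟨l, rfl⟩
      · simp only [Fin.val_zero] at hij; omega
      · rw [eA k, eB k, eA l, eB l]
        apply hp2 k l
        simp only [Fin.val_succ] at hij
        omega

end Cons

section Main

lemma aux_pdce : ∀ (m : ℕ) (d : Fin m → Dir), (∀ i, d i ≠ Dir.L) →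
    ∀ (S : Set (ℝ × ℝ)), S.Finite → S.ncard = m + 1 → ConvexPos S → GenPos S →
    ∀ (b t : ℝ × ℝ), RightSided S b t →
    ∃ E : Fin (m + 1) → ℝ × ℝ, PDCE d E S ∧ (E 0 = b ∨ E 0 = t) ∧
      ∀ h0 : 0 < m, (d ⟨0, h0⟩ = Dir.U → E 0 = b) ∧ (d ⟨0, h0⟩ = Dir.D → E 0 = t) ∧
        (d ⟨0, h0⟩ = Dir.R → IsLeftmost S (E 0)) := by
  intro m
  induction m with
  | zero =>
    intro d hd S hfin hcard hconv hgen b t hside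
    obtain ⟨a, rfl⟩ := Set.ncard_eq_one.1 hcard
    obtain ⟨hb, ht, -⟩ := hside
    have hba : b = a := hb.1
    have hta : t = a := ht.1
    refine ⟨fun _ => a, ⟨⟨fun x y _ => by omega, ?_⟩, fun i => i.elim0,
      fun i j _ => i.elim0, fun i j _ => i.elim0⟩, Or.inl hba.symm, fun h0 => absurd h0 (by omega)⟩
    simp [Set.range_const]
  | succ m IH =>
    intro d hd S hfin hcard hconv hgen b t hside
    obtain ⟨hb, ht, hlt⟩ := hside
    have hSne : S.Nonempty := Set.nonempty_of_ncard_ne_zero (by rw [hcard]; exact Nat.succ_ne_zero _)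
    have hbt : b ≠ t := by
      intro h
      obtain ⟨p, hpS, hpb⟩ := Set.exists_ne_of_one_lt_ncard (by rw [hcard]; omega) b
      have h1 := hb.2 p hpS hpb
      have h2 := ht.2 p hpS (h ▸ hpb)
      rw [h] at h1
      linarith
    have hbt2 : b.2 < t.2 := ht.2 b hb.1 hbt
    -- choose the first vertex
    obtain ⟨v1, hv1U, hv1D, hv1R, hv1bt⟩ :
        ∃ v1, (d 0 = Dir.U → v1 = b) ∧ (d 0 = Dir.D → v1 = t) ∧
          (d 0 = Dir.R → IsLeftmost S v1) ∧ (v1 = b ∨ v1 = t) := by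
      rcases h0 : d 0 with _ | _ | _ | _
      · exact ⟨b, fun _ => rfl, by simp [h0], by simp [h0], Or.inl rfl⟩
      · exact ⟨t, by simp [h0], fun _ => rfl, by simp [h0], Or.inr rfl⟩
      · exact absurd h0 (hd 0)
      · obtain ⟨l, hl⟩ := exists_leftmost hfin hSne hgen
        exact ⟨l, by simp [h0], by simp [h0], fun _ => hl,
          leftmost_eq_bot_or_top ⟨hb, ht, hlt⟩ hl⟩
    have hv1S : v1 ∈ S := by rcases hv1bt with rfl | rfl; exacts [hb.1, ht.1]
    have hdir0 : ∀ q ∈ S, q ≠ v1 → dirOk (d 0) v1 q := by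
      intro q hq hne
      rcases h0 : d 0 with _ | _ | _ | _
      · rw [hv1U h0] at hne ⊢
        exact hb.2 q hq hne
      · rw [hv1D h0] at hne ⊢
        exact ht.2 q hq hne
      · exact absurd h0 (hd 0)
      · exact (hv1R h0).2 q hq hne
    -- the remaining point set
    have hfin' : (S \ {v1}).Finite := hfin.diff
    have hcard' : (S \ {v1}).ncard = m + 1 := by
      rw [Set.ncard_diff_singleton_of_mem hv1S, hcard]
      omega
    have hconv' : ConvexPos (S \ {v1}) := convexPos_mono Set.diff_subset hconv
    have hgen' : GenPos (S \ {v1}) := genPos_mono Set.diff_subset hgen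
    have hS'ne : (S \ {v1}).Nonempty := Set.nonempty_of_ncard_ne_zero (by rw [hcard']; exact Nat.succ_ne_zero _)
    -- a right-sided structure on the remaining set, and the side condition
    have hmain : ∃ E' : Fin (m + 1) → ℝ × ℝ, PDCE (fun i : Fin m => d i.succ) E' (S \ {v1}) ∧
        ∃ σ : ℝ, ∀ q ∈ S \ {v1}, q ≠ E' 0 → σ * cross v1 (E' 0) q < 0 := by
      rcases hv1bt with rfl | rfl
      · -- v1 = b : remove the bottom point
        obtain ⟨b', hb'⟩ := exists_bottommost hfin' hS'ne hgen'
        have hb'S : b' ∈ S := hb'.1.1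
        have hb'b : b' ≠ v1 := hb'.1.2
        have ht' : IsTopmost (S \ {v1}) t :=
          ⟨⟨ht.1, hbt.symm⟩, fun p hp hne => ht.2 p hp.1 hne⟩
        have hside' : RightSided (S \ {v1}) b' t := by
          refine ⟨hb', ht', fun q hq hq1 hq2 => ?_⟩
          exact chain hconv hgen ⟨hb, ht, hlt⟩ hb'S ht.1 hq.1
            (hb'.2 q hq hq1) (ht.2 q hq.1 hq2)
        obtain ⟨E', hPDCE', hE'0, -⟩ := IH (fun i => d i.succ) (fun i => hd i.succ)
          (S \ {v1}) hfin' hcard' hconv' hgen' b' t hside'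
        refine ⟨E', hPDCE', ?_⟩
        rcases hE'0 with h | h
        · -- next vertex is the new bottommost point b'
          refine ⟨-1, fun q hq hne => ?_⟩
          rw [h] at hne ⊢
          have h1 : b'.2 < q.2 := hb'.2 q hq hne
          have h2 : v1.2 < b'.2 := hb.2 b' hb'S hb'b
          have h3 : cross v1 q b' < 0 :=
            chain hconv hgen ⟨hb, ht, hlt⟩ hb.1 hq.1 hb'S h2 h1
          have h4 := cross_swap23 v1 b' q
          linarith [h3, h4]
        · -- next vertex is the top point t
          refine ⟨1, fun q hq hne => ?_⟩
          rw [h] at hne ⊢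
          have := hlt q hq.1 (fun hh => hq.2 (by simp [hh])) hne
          linarith
      · -- v1 = t : remove the top point
        obtain ⟨t', ht'⟩ := exists_topmost hfin' hS'ne hgen'
        have ht'S : t' ∈ S := ht'.1.1
        have ht't : t' ≠ v1 := ht'.1.2
        have hb' : IsBottommost (S \ {v1}) b :=
          ⟨⟨hb.1, hbt⟩, fun p hp hne => hb.2 p hp.1 hne⟩
        have hside' : RightSided (S \ {v1}) b t' := by
          refine ⟨hb', ht', fun q hq hq1 hq2 => ?_⟩
          exact chain hconv hgen ⟨hb, ht, hlt⟩ hb.1 ht'S hq.1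
            (hb.2 q hq.1 hq1) (ht'.2 q hq hq2)
        obtain ⟨E', hPDCE', hE'0, -⟩ := IH (fun i => d i.succ) (fun i => hd i.succ)
          (S \ {v1}) hfin' hcard' hconv' hgen' b t' hside'
        refine ⟨E', hPDCE', ?_⟩
        rcases hE'0 with h | h
        · -- next vertex is the bottom point b
          refine ⟨-1, fun q hq hne => ?_⟩
          rw [h] at hne ⊢
          have := hlt q hq.1 hne (fun hh => hq.2 (by simp [hh]))
          linarith [this, cross_swap12 b v1 q]
        · -- next vertex is the new topmost point t'
          refine ⟨1, fun q hq hne => ?_⟩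
          rw [h] at hne ⊢
          have h1 : q.2 < t'.2 := ht'.2 q hq hne
          have h2 : t'.2 < v1.2 := ht.2 t' ht'S ht't
          have h3 : cross q v1 t' < 0 :=
            chain hconv hgen ⟨hb, ht, hlt⟩ hq.1 ht.1 ht'S h1 h2
          linarith [h3, cross_cyc q v1 t']
    obtain ⟨E', hPDCE', σ, hσ⟩ := hmain
    have hdirE : dirOk (d 0) v1 (E' 0) := by
      have h0r : E' 0 ∈ S \ {v1} := hPDCE'.1.2 ▸ ⟨0, rfl⟩
      exact hdir0 (E' 0) h0r.1 h0r.2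
    have hPDCE := cons_pdce d S v1 hv1S E' hPDCE' hdirE σ hσ
    refine ⟨Fin.cons v1 E', hPDCE, ?_, ?_⟩
    · rcases hv1bt with rfl | rfl
      exacts [Or.inl (Fin.cons_zero _ _), Or.inr (Fin.cons_zero _ _)]
    · intro h0
      have hz : (⟨0, h0⟩ : Fin (m + 1)) = 0 := rfl
      rw [hz]
      have hcz : (Fin.cons v1 E' : Fin (m + 2) → ℝ × ℝ) 0 = v1 := Fin.cons_zero _ _
      refine ⟨fun h => ?_, fun h => ?_, fun h => ?_⟩
      · rw [hcz, hv1U h]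
      · rw [hcz, hv1D h]
      · rw [hcz]; exact hv1R h

end Main

/-- any {U,D,R}-path has a PDCE on a right-sided convex point set, with the
first vertex on b(S), t(S), or the leftmost point (which is t(S) or b(S)),
according to the first label. -/
theorem rightSided_UDR_pdce {m : ℕ} (hm : 0 < m) (d : Fin m → Dir)
    (hd : ∀ i, d i ≠ Dir.L) (S : Set (ℝ × ℝ)) (hfin : S.Finite)
    (hcard : S.ncard = m + 1) (hconv : ConvexPos S) (hgen : GenPos S)
    (b t : ℝ × ℝ) (hside : RightSided S b t) :
    ∃ E : Fin (m + 1) → ℝ × ℝ, PDCE d E S ∧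
      (d ⟨0, hm⟩ = Dir.U → E 0 = b) ∧
      (d ⟨0, hm⟩ = Dir.D → E 0 = t) ∧
      (d ⟨0, hm⟩ = Dir.R → IsLeftmost S (E 0) ∧ (E 0 = t ∨ E 0 = b)) := by
  obtain ⟨E, h1, h2, h3⟩ := aux_pdce m d hd S hfin hcard hconv hgen b t hside
  obtain ⟨hU, hD, hR⟩ := h3 hm
  exact ⟨E, h1, hU, hD, fun h => ⟨hR h, h2.symm⟩⟩
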